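/- A probability measure ν on Λ is a quasi-stationary distribution for Q if and only if ν is a fixed point of the map Φ, where Φ(μ) is the unique invariant distribution of the μ-return process with rates q^μ(x,y) = q(x,y) + q(x,0)μ(y). -/
import Mathlib


/-- `ν` is a QSD for `Q` iff `ν` is a fixed point of the map `Φ`, where `Φ(μ)` is the
unique invariant distribution of the `μ`-return process with rates
`q^μ(x,y) = q(x,y) + q(x,0) μ(y)` (finite state space; `Φ` is assumed to produce
the invariant probability of the return process, unique among probabilities). -/
theorem qsd_iff_fixed_point_of_return_map {Λ : Type*} [Fintype Λ] [DecidableEq Λ]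
    (q : Λ → Option Λ → ℝ)
    (Φ : (Λ → ℝ) → (Λ → ℝ))
    (hΦinv : ∀ μ : Λ → ℝ, (∀ x, 0 ≤ μ x) → (∑ x, μ x) = 1 →
      (∀ x, 0 ≤ Φ μ x) ∧ ((∑ x, Φ μ x) = 1) ∧
        (∀ y, (∑ x, Φ μ x * (q x (some y) + q x none * μ y)) = 0))
    (hΦuniq : ∀ μ : Λ → ℝ, (∀ x, 0 ≤ μ x) → (∑ x, μ x) = 1 →
      ∀ π : Λ → ℝ, (∀ x, 0 ≤ π x) → (∑ x, π x) = 1 →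
      (∀ y, (∑ x, π x * (q x (some y) + q x none * μ y)) = 0) → π = Φ μ)
    (ν : Λ → ℝ) (hνnn : ∀ x, 0 ≤ ν x) (hν1 : (∑ x, ν x) = 1) :
    (∀ x : Λ, (0:ℝ) = (∑ y, q y (some x) * ν y) + (∑ y, q y none * ν y) * ν x)
      ↔ Φ ν = ν := by
  have key : ∀ y : Λ, (∑ x, ν x * (q x (some y) + q x none * ν y))
      = (∑ x, q x (some y) * ν x) + (∑ x, q x none * ν x) * ν y := by
    intro y
    rw [Finset.sum_mul]
    rw [← Finset.sum_add_distrib]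
    congr 1; ext x; ring
  constructor
  · intro hqsd
    exact (hΦuniq ν hνnn hν1 ν hνnn hν1 (fun y => by
      rw [key y, ← hqsd y])).symm
  · intro hfix x
    have h := (hΦinv ν hνnn hν1).2.2 x
    rw [hfix] at h
    rw [key x] at h
    linarith
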